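/- Let b, N be positive integers, P_R, Ω_D, N_0 > 0, let β_1, …, β_N be i.i.d. nonnegative random variables with density f(x) = (2x/Ω_D)·exp(−x²/Ω_D) on x ≥ 0, let Ψ_1, …, Ψ_N be i.i.d. real random variables uniform on [−π/2^b, π/2^b), all 2N variables mutually independent, and set v^T h_D = Σ_{n=1}^{N} β_n·e^{iΨ_n}. Then (P_R/N)·E[|v^T h_D|²] / N_0 = P_R·Ω_D·(1 + (N−1)·(π/4)·Q) / N_0, where Q = ((2^b/π)·sin(π/2^b))². -/

import Mathlib

open MeasureTheory ProbabilityTheory Real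

section Aux
open Set Filter Topology

lemma rayleigh_int_aux {c : ℝ} (hc : 0 < c) (k : ℕ) :
    IntegrableOn (fun x : ℝ => x ^ k * Real.exp (-c * x ^ 2)) (Ioi 0) := by
  have := integrableOn_rpow_mul_exp_neg_mul_sq hc (s := k)
    ((neg_lt_zero.mpr one_pos).trans_le (Nat.cast_nonneg k))
  refine this.congr_fun (fun x hx => ?_) measurableSet_Ioi
  rw [← Real.rpow_natCast x k]

lemma exp_sq_tendsto {c : ℝ} (hc : 0 < c) :
    Tendsto (fun x : ℝ => Real.exp (-c * x ^ 2)) atTop (𝓝 0) := by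
  have hsq : Tendsto (fun x : ℝ => x ^ 2) atTop atTop := tendsto_pow_atTop two_ne_zero
  have he : Tendsto (fun y : ℝ => Real.exp (-(c * y))) atTop (𝓝 0) :=
    tendsto_exp_neg_atTop_nhds_zero.comp (tendsto_id.const_mul_atTop hc)
  exact (he.comp hsq).congr (fun x => by simp [neg_mul])

lemma sq_exp_sq_tendsto {c : ℝ} (hc : 0 < c) :
    Tendsto (fun x : ℝ => x ^ 2 * Real.exp (-c * x ^ 2)) atTop (𝓝 0) := by
  have hsq : Tendsto (fun x : ℝ => x ^ 2) atTop atTop := tendsto_pow_atTop two_ne_zero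
  have h0 : Tendsto (fun y : ℝ => y ^ (1:ℝ) * Real.exp (-c * y)) atTop (𝓝 0) :=
    tendsto_rpow_mul_exp_neg_mul_atTop_nhds_zero 1 c hc
  have h0' : Tendsto (fun y : ℝ => y * Real.exp (-c * y)) atTop (𝓝 0) :=
    h0.congr' (by filter_upwards [eventually_ge_atTop (0:ℝ)] with y hy; rw [Real.rpow_one])
  exact h0'.comp hsq

lemma rayleigh_second_moment {Ω : ℝ} (hΩ : 0 < Ω) :
    ∫ x in Ioi (0:ℝ), 2 * x / Ω * Real.exp (-x ^ 2 / Ω) * x ^ 2 = Ω := by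
  have hc : (0:ℝ) < 1/Ω := by positivity
  have key : ∫ x in Ioi (0:ℝ), (2 / Ω) * (x^3 * Real.exp (-(1/Ω) * x ^ 2)) = Ω := by
    have hderiv : ∀ x ∈ Ioi (0:ℝ), HasDerivAt (fun x : ℝ => -(x^2 + Ω) * Real.exp (-(1/Ω) * x^2))
        ((2 / Ω) * (x^3 * Real.exp (-(1/Ω) * x ^ 2))) x := by
      intro x hx
      have h1 : HasDerivAt (fun x : ℝ => -(1/Ω) * x^2) (-(1/Ω) * (2*x)) x := by
        simpa using ((hasDerivAt_pow 2 x).const_mul (-(1/Ω)))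
      have h2 := h1.exp
      have h3 : HasDerivAt (fun x : ℝ => -(x^2 + Ω)) (-(2*x)) x := by
        exact (((hasDerivAt_pow 2 x).add_const Ω).neg).congr_deriv (by norm_num)
      have := h3.mul h2
      refine this.congr_deriv ?_
      field_simp
      ring
    have hint : IntegrableOn (fun x : ℝ => (2 / Ω) * (x^3 * Real.exp (-(1/Ω) * x ^ 2))) (Ioi 0) :=
      (rayleigh_int_aux hc 3).const_mul _
    have htend : Tendsto (fun x : ℝ => -(x^2 + Ω) * Real.exp (-(1/Ω) * x^2)) atTop (𝓝 0) := by
      have : (fun x : ℝ => -(x^2 + Ω) * Real.exp (-(1/Ω) * x^2)) =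
          fun x : ℝ => -(x^2 * Real.exp (-(1/Ω) * x^2)) - Ω * Real.exp (-(1/Ω) * x^2) := by
        funext x; ring
      rw [this, show (0:ℝ) = -0 - Ω * 0 by ring]
      exact ((sq_exp_sq_tendsto hc).neg).sub ((exp_sq_tendsto hc).const_mul Ω)
    have hcont : ContinuousWithinAt (fun x : ℝ => -(x^2 + Ω) * Real.exp (-(1/Ω) * x^2)) (Ici 0) 0 :=
      (Continuous.mul (by continuity) (Real.continuous_exp.comp (by continuity))).continuousWithinAt
    have := integral_Ioi_of_hasDerivAt_of_tendsto hcont hderiv hint htend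
    rw [this]; simp
  refine Eq.trans (setIntegral_congr_fun measurableSet_Ioi (fun x hx => ?_)) key
  have h : -x^2/Ω = -(1/Ω)*x^2 := by ring
  rw [h]; ring

lemma rayleigh_first_moment {Ω : ℝ} (hΩ : 0 < Ω) :
    ∫ x in Ioi (0:ℝ), 2 * x / Ω * Real.exp (-x ^ 2 / Ω) * x = Real.sqrt (π * Ω) / 2 := by
  have hc : (0:ℝ) < 1/Ω := by positivity
  have hgauss : ∫ x in Ioi (0:ℝ), Real.exp (-(1/Ω) * x ^ 2) = Real.sqrt (π / (1/Ω)) / 2 :=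
    integral_gaussian_Ioi (1/Ω)
  have key : ∫ x in Ioi (0:ℝ), x ^ 2 * Real.exp (-(1/Ω) * x ^ 2)
      = (Ω/2) * (Real.sqrt (π / (1/Ω)) / 2) := by
    have hderiv : ∀ x ∈ Ioi (0:ℝ), HasDerivAt (fun x : ℝ => -(Ω/2) * x * Real.exp (-(1/Ω) * x^2))
        (x ^ 2 * Real.exp (-(1/Ω) * x ^ 2) - (Ω/2) * Real.exp (-(1/Ω) * x ^ 2)) x := by
      intro x hx
      have h1 : HasDerivAt (fun x : ℝ => -(1/Ω) * x^2) (-(1/Ω) * (2*x)) x := by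
        simpa using ((hasDerivAt_pow 2 x).const_mul (-(1/Ω)))
      have h2 := h1.exp
      have h3 : HasDerivAt (fun x : ℝ => -(Ω/2) * x) (-(Ω/2)) x := by
        simpa using (hasDerivAt_id x).const_mul (-(Ω/2))
      have := h3.mul h2
      refine this.congr_deriv ?_
      field_simp
      ring
    have hint0 : IntegrableOn (fun x : ℝ => (Ω/2) * Real.exp (-(1/Ω) * x ^ 2)) (Ioi 0) :=
      ((integrable_exp_neg_mul_sq hc).const_mul (Ω/2)).integrableOn
    have hint : IntegrableOn (fun x : ℝ =>
        x ^ 2 * Real.exp (-(1/Ω) * x ^ 2) - (Ω/2) * Real.exp (-(1/Ω) * x ^ 2)) (Ioi 0) :=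
      (rayleigh_int_aux hc 2).sub hint0
    have htend : Tendsto (fun x : ℝ => -(Ω/2) * x * Real.exp (-(1/Ω) * x^2)) atTop (𝓝 0) := by
      have h0 : Tendsto (fun y : ℝ => y ^ ((1:ℝ)/2) * Real.exp (-(1/Ω) * y)) atTop (𝓝 0) :=
        tendsto_rpow_mul_exp_neg_mul_atTop_nhds_zero _ _ hc
      have h1 : Tendsto (fun x : ℝ => x * Real.exp (-(1/Ω) * x ^ 2)) atTop (𝓝 0) := by
        have hsq : Tendsto (fun x : ℝ => x ^ 2) atTop atTop := tendsto_pow_atTop two_ne_zero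
        refine (h0.comp hsq).congr' ?_
        filter_upwards [eventually_ge_atTop (0:ℝ)] with x hx
        simp only [Function.comp]
        rw [← Real.rpow_natCast (x := x) 2, ← Real.rpow_mul hx]
        norm_num
      rw [show (0:ℝ) = -(Ω/2) * 0 by ring]
      exact (h1.const_mul _).congr (fun x => by ring)
    have hcont : ContinuousWithinAt (fun x : ℝ => -(Ω/2) * x * Real.exp (-(1/Ω) * x^2)) (Ici 0) 0 :=
      (Continuous.mul (by continuity) (Real.continuous_exp.comp (by continuity))).continuousWithinAt
    have heq := integral_Ioi_of_hasDerivAt_of_tendsto hcont hderiv hint htend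
    have hsplit : ∫ x in Ioi (0:ℝ),
        (x ^ 2 * Real.exp (-(1/Ω) * x ^ 2) - (Ω/2) * Real.exp (-(1/Ω) * x ^ 2))
        = (∫ x in Ioi (0:ℝ), x ^ 2 * Real.exp (-(1/Ω) * x ^ 2))
          - (Ω/2) * ∫ x in Ioi (0:ℝ), Real.exp (-(1/Ω) * x ^ 2) := by
      rw [integral_sub (rayleigh_int_aux hc 2) hint0, integral_const_mul]
    rw [hsplit, hgauss, show (0:ℝ) - -(Ω/2) * 0 * Real.exp (-(1/Ω) * 0^2) = 0 by ring] at heq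
    linarith
  have trans : ∫ x in Ioi (0:ℝ), 2 * x / Ω * Real.exp (-x ^ 2 / Ω) * x
      = (2/Ω) * ∫ x in Ioi (0:ℝ), x ^ 2 * Real.exp (-(1/Ω) * x ^ 2) := by
    rw [← integral_const_mul]
    refine setIntegral_congr_fun measurableSet_Ioi (fun x hx => ?_)
    have h : -x^2/Ω = -(1/Ω)*x^2 := by ring
    rw [h]; ring
  rw [trans, key, show π / (1/Ω) = π * Ω by field_simp]
  field_simp

lemma rayleigh_pow_integrableOn {Ω : ℝ} (hΩ : 0 < Ω) (k : ℕ) :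
    IntegrableOn (fun x : ℝ => 2 * x / Ω * Real.exp (-x ^ 2 / Ω) * x ^ k) (Ici 0) := by
  have hc : (0:ℝ) < 1/Ω := by positivity
  rw [integrableOn_Ici_iff_integrableOn_Ioi]
  refine IntegrableOn.congr_fun ((rayleigh_int_aux hc (k+1)).const_mul (2/Ω))
    (fun x hx => ?_) measurableSet_Ioi
  have h : -x^2/Ω = -(1/Ω)*x^2 := by ring
  rw [h]; ring

lemma density_indicator_eq {Ω : ℝ} (g : ℝ → ℝ) :
    (fun x : ℝ => (if 0 ≤ x then 2 * x / Ω * Real.exp (-x ^ 2 / Ω) else 0) * g x)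
      = Set.indicator (Ici 0) (fun x => 2 * x / Ω * Real.exp (-x ^ 2 / Ω) * g x) := by
  funext x
  by_cases h : (0:ℝ) ≤ x <;> simp [Set.indicator, Set.mem_Ici, h]

lemma density_integral_eq {Ω : ℝ} (g : ℝ → ℝ) :
    ∫ x : ℝ, (if 0 ≤ x then 2 * x / Ω * Real.exp (-x ^ 2 / Ω) else 0) * g x
      = ∫ x in Ioi (0:ℝ), 2 * x / Ω * Real.exp (-x ^ 2 / Ω) * g x := by
  rw [density_indicator_eq, integral_indicator measurableSet_Ici, integral_Ici_eq_integral_Ioi]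

lemma density_pow_integrable {Ω : ℝ} (hΩ : 0 < Ω) (k : ℕ) :
    Integrable (fun x : ℝ =>
      (if 0 ≤ x then 2 * x / Ω * Real.exp (-x ^ 2 / Ω) else 0) * x ^ k) := by
  rw [density_indicator_eq (fun x => x ^ k), integrable_indicator_iff measurableSet_Ici]
  exact rayleigh_pow_integrableOn hΩ k

end Aux

/-- Destination-side SNR under Rayleigh fading (Eq. (ez5) of Corollary 1): with
i.i.d. Rayleigh amplitudes `β_n` of mean-square `Ω_D` and i.i.d. quantization
errors `Ψ_n` uniform on `[-π/2^b, π/2^b)`, all `2N` variables mutually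
independent, `(P_R/N)·E[|vᵀh_D|²]/N_0 = P_R·Ω_D·(1+(N−1)·(π/4)·Q)/N_0`,
where `Q = ((2^b/π)·sin(π/2^b))²`. -/
theorem destination_side_SNR_rayleigh
    {Ωs : Type*} [MeasurableSpace Ωs] (μ : Measure Ωs) [IsProbabilityMeasure μ]
    (b N : ℕ) (hb : 0 < b) (hN : 0 < N)
    (P_R Ω_D N_0 : ℝ) (hPR : 0 < P_R) (hΩD : 0 < Ω_D) (hN0 : 0 < N_0)
    (β Ψ : Fin N → Ωs → ℝ)
    (hβmeas : ∀ n, Measurable (β n)) (hΨmeas : ∀ n, Measurable (Ψ n))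
    (hβnn : ∀ n ω, 0 ≤ β n ω)
    (hβpdf : ∀ n, Measure.map (β n) μ = volume.withDensity
      (fun x => ENNReal.ofReal (if 0 ≤ x then 2 * x / Ω_D * Real.exp (-x ^ 2 / Ω_D) else 0)))
    (hΨunif : ∀ n, Measure.map (Ψ n) μ =
      ENNReal.ofReal ((2 : ℝ) ^ b / (2 * π)) •
        volume.restrict (Set.Ico (-(π / 2 ^ b)) (π / 2 ^ b)))
    -- all 2N random variables are mutually independent
    (hindep : iIndepFun (Sum.elim β Ψ) μ) :
    (P_R / N) *
        (∫ ω, ‖∑ n, (β n ω : ℂ) * Complex.exp (Complex.I * (Ψ n ω : ℂ))‖ ^ 2 ∂μ) /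
        N_0 =
      P_R * Ω_D *
          (1 + ((N : ℝ) - 1) * (π / 4) * ((2 : ℝ) ^ b / π * Real.sin (π / 2 ^ b)) ^ 2) /
        N_0 := by
  have hπ := Real.pi_pos
  set a : ℝ := π / 2 ^ b with ha_def
  have ha : 0 < a := by positivity
  set c : ℝ := (2 : ℝ) ^ b / π * Real.sin a with hc_def
  set d : ℝ → ℝ := fun x => if 0 ≤ x then 2 * x / Ω_D * Real.exp (-x ^ 2 / Ω_D) else 0 with hd_def
  have hd_meas : Measurable d := by
    apply Measurable.ite measurableSet_Ici
    · fun_prop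
    · exact measurable_const
  have hd_nn : ∀ x, 0 ≤ d x := by
    intro x
    by_cases h : (0:ℝ) ≤ x <;> simp only [hd_def, h, if_true, if_false, le_refl]
    positivity
  -- measurability of the combined family
  have hfmeas : ∀ i, Measurable (Sum.elim β Ψ i) := by
    rintro (n | n)
    · exact hβmeas n
    · exact hΨmeas n
  -- transfer of expectations for β
  have hEβ : ∀ (n : Fin N) (g : ℝ → ℝ), Measurable g →
      ∫ ω, g (β n ω) ∂μ = ∫ x : ℝ, d x * g x := by
    intro n g hg
    rw [← integral_map (hβmeas n).aemeasurable hg.aestronglyMeasurable, hβpdf n]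
    have h1 : (fun x : ℝ => ENNReal.ofReal (if 0 ≤ x then
        2 * x / Ω_D * Real.exp (-x ^ 2 / Ω_D) else 0)) = fun x => ((d x).toNNReal : ENNReal) :=
      rfl
    rw [h1, integral_withDensity_eq_integral_smul (hd_meas.real_toNNReal) g]
    congr 1
    funext x
    rw [NNReal.smul_def, smul_eq_mul, Real.coe_toNNReal _ (hd_nn x)]
  -- transfer of integrability for β
  have hIβ : ∀ (n : Fin N) (g : ℝ → ℝ), Measurable g →
      Integrable (fun x : ℝ => d x * g x) volume → Integrable (fun ω => g (β n ω)) μ := by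
    intro n g hg hint
    have h2 : Integrable g (Measure.map (β n) μ) := by
      rw [hβpdf n]
      have h1 : (fun x : ℝ => ENNReal.ofReal (if 0 ≤ x then
          2 * x / Ω_D * Real.exp (-x ^ 2 / Ω_D) else 0)) = fun x => ENNReal.ofReal (d x) := rfl
      rw [h1, integrable_withDensity_iff (hd_meas.ennreal_ofReal)
        (Filter.Eventually.of_forall fun x => ENNReal.ofReal_lt_top)]
      refine hint.congr (Filter.Eventually.of_forall fun x => ?_)
      show d x * g x = g x * (ENNReal.ofReal (d x)).toReal
      rw [ENNReal.toReal_ofReal (hd_nn x), mul_comm]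
    exact (integrable_map_measure hg.aestronglyMeasurable (hβmeas n).aemeasurable).mp h2
  -- β moments
  have hβ1int : ∀ n, Integrable (β n) μ := by
    intro n
    refine hIβ n (fun x => x) measurable_id ((density_pow_integrable hΩD 1).congr
      (Filter.Eventually.of_forall fun x => by simp [hd_def]))
  have hβ2int : ∀ n, Integrable (fun ω => β n ω ^ 2) μ := by
    intro n
    exact hIβ n (fun x => x ^ 2) (by fun_prop) (density_pow_integrable hΩD 2)
  have hEβ1 : ∀ n, ∫ ω, β n ω ∂μ = Real.sqrt (π * Ω_D) / 2 := by
    intro n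
    have := hEβ n (fun x => x) measurable_id
    rw [show (fun ω => β n ω) = fun ω => (fun x => x) (β n ω) from rfl] at *
    rw [this, density_integral_eq (Ω := Ω_D) (fun x => x)]
    exact rayleigh_first_moment hΩD
  have hEβ2 : ∀ n, ∫ ω, β n ω ^ 2 ∂μ = Ω_D := by
    intro n
    rw [show (fun ω => β n ω ^ 2) = fun ω => (fun x => x ^ 2) (β n ω) from rfl,
      hEβ n (fun x => x ^ 2) (by fun_prop), density_integral_eq (Ω := Ω_D) (fun x => x ^ 2)]
    exact rayleigh_second_moment hΩD
  -- transfer for Ψ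
  have hEΨ : ∀ (n : Fin N) (g : ℝ → ℝ), Measurable g →
      ∫ ω, g (Ψ n ω) ∂μ = ((2:ℝ) ^ b / (2 * π)) * ∫ x in Set.Ico (-a) a, g x := by
    intro n g hg
    rw [← integral_map (hΨmeas n).aemeasurable hg.aestronglyMeasurable, hΨunif n,
      integral_smul_measure, ENNReal.toReal_ofReal (by positivity), smul_eq_mul]
  have hIco : ∀ g : ℝ → ℝ, (∫ x in Set.Ico (-a) a, g x) = ∫ x in (-a)..a, g x := by
    intro g
    rw [integral_Ico_eq_integral_Ioo, ← integral_Ioc_eq_integral_Ioo,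
      intervalIntegral.integral_of_le (by linarith)]
  have hEcos : ∀ n, ∫ ω, Real.cos (Ψ n ω) ∂μ = c := by
    intro n
    rw [show (fun ω => Real.cos (Ψ n ω)) = fun ω => (fun x => Real.cos x) (Ψ n ω) from rfl,
      hEΨ n Real.cos Real.measurable_cos, hIco Real.cos, integral_cos, Real.sin_neg,
      hc_def]
    field_simp
    ring
  have hEsin : ∀ n, ∫ ω, Real.sin (Ψ n ω) ∂μ = 0 := by
    intro n
    rw [show (fun ω => Real.sin (Ψ n ω)) = fun ω => (fun x => Real.sin x) (Ψ n ω) from rfl,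
      hEΨ n Real.sin Real.measurable_sin, hIco Real.sin, integral_sin, Real.cos_neg]
    ring
  have hcosint : ∀ n, Integrable (fun ω => Real.cos (Ψ n ω)) μ := by
    intro n
    refine Integrable.mono' (integrable_const 1)
      ((Real.measurable_cos.comp (hΨmeas n)).aestronglyMeasurable)
      (Filter.Eventually.of_forall fun ω => ?_)
    rw [Real.norm_eq_abs]
    exact Real.abs_cos_le_one _
  have hsinint : ∀ n, Integrable (fun ω => Real.sin (Ψ n ω)) μ := by
    intro n
    refine Integrable.mono' (integrable_const 1)
      ((Real.measurable_sin.comp (hΨmeas n)).aestronglyMeasurable)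
      (Filter.Eventually.of_forall fun ω => ?_)
    rw [Real.norm_eq_abs]
    exact Real.abs_sin_le_one _
  -- the A and B random variables
  set A : Fin N → Ωs → ℝ := fun n ω => β n ω * Real.cos (Ψ n ω) with hA_def
  set B : Fin N → Ωs → ℝ := fun n ω => β n ω * Real.sin (Ψ n ω) with hB_def
  have hAmeas : ∀ n, Measurable (A n) := fun n => (hβmeas n).mul (Real.measurable_cos.comp (hΨmeas n))
  have hBmeas : ∀ n, Measurable (B n) := fun n => (hβmeas n).mul (Real.measurable_sin.comp (hΨmeas n))
  have hAint : ∀ n, Integrable (A n) μ := by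
    intro n
    refine Integrable.mono' (hβ1int n) (hAmeas n).aestronglyMeasurable
      (Filter.Eventually.of_forall fun ω => ?_)
    rw [hA_def, Real.norm_eq_abs, abs_mul, abs_of_nonneg (hβnn n ω)]
    calc β n ω * |Real.cos (Ψ n ω)| ≤ β n ω * 1 :=
          mul_le_mul_of_nonneg_left (Real.abs_cos_le_one _) (hβnn n ω)
      _ = β n ω := mul_one _
  have hBint : ∀ n, Integrable (B n) μ := by
    intro n
    refine Integrable.mono' (hβ1int n) (hBmeas n).aestronglyMeasurable
      (Filter.Eventually.of_forall fun ω => ?_)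
    rw [hB_def, Real.norm_eq_abs, abs_mul, abs_of_nonneg (hβnn n ω)]
    calc β n ω * |Real.sin (Ψ n ω)| ≤ β n ω * 1 :=
          mul_le_mul_of_nonneg_left (Real.abs_sin_le_one _) (hβnn n ω)
      _ = β n ω := mul_one _
  -- expectations of A and B
  have hβΨindep : ∀ n : Fin N, IndepFun (β n) (Ψ n) μ := by
    intro n
    exact hindep.indepFun (show (Sum.inl n : Fin N ⊕ Fin N) ≠ Sum.inr n by simp)
  have hEA : ∀ n, ∫ ω, A n ω ∂μ = Real.sqrt (π * Ω_D) / 2 * c := by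
    intro n
    have hi : IndepFun (β n) (fun ω => Real.cos (Ψ n ω)) μ :=
      (hβΨindep n).comp measurable_id Real.measurable_cos
    have h' : ∫ ω, A n ω ∂μ = (∫ ω, β n ω ∂μ) * ∫ ω, Real.cos (Ψ n ω) ∂μ :=
      hi.integral_fun_mul_eq_mul_integral (hβ1int n).aestronglyMeasurable (hcosint n).aestronglyMeasurable
    rw [h', hEβ1 n, hEcos n]
  have hEB : ∀ n, ∫ ω, B n ω ∂μ = 0 := by
    intro n
    have hi : IndepFun (β n) (fun ω => Real.sin (Ψ n ω)) μ :=
      (hβΨindep n).comp measurable_id Real.measurable_sin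
    have h' : ∫ ω, B n ω ∂μ = (∫ ω, β n ω ∂μ) * ∫ ω, Real.sin (Ψ n ω) ∂μ :=
      hi.integral_fun_mul_eq_mul_integral (hβ1int n).aestronglyMeasurable (hsinint n).aestronglyMeasurable
    rw [h', hEsin n, mul_zero]
  -- independence of (A n, B n) type functions for distinct n m
  have hpair : ∀ (n m : Fin N), n ≠ m → ∀ (u v : ℝ → ℝ), Measurable u → Measurable v →
      IndepFun (fun ω => β n ω * u (Ψ n ω)) (fun ω => β m ω * v (Ψ m ω)) μ := by
    intro n m hnm u v hu hv
    have h := hindep.indepFun_prodMk_prodMk hfmeas (Sum.inl n) (Sum.inr n) (Sum.inl m)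
      (Sum.inr m) (by simp [hnm]) (by simp) (by simp) (by simp [hnm])
    exact h.comp (show Measurable fun p : ℝ × ℝ => p.1 * u p.2 from
        measurable_fst.mul (hu.comp measurable_snd))
      (show Measurable fun p : ℝ × ℝ => p.1 * v p.2 from
        measurable_fst.mul (hv.comp measurable_snd))
  -- the summand functions
  set g : Fin N → Fin N → Ωs → ℝ := fun n m ω => A n ω * A m ω + B n ω * B m ω with hg_def
  have hgint : ∀ n m, Integrable (g n m) μ := by
    intro n m
    by_cases hnm : n = m
    · subst hnm
      refine (hβ2int n).congr (Filter.Eventually.of_forall fun ω => ?_)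
      have := Real.sin_sq_add_cos_sq (Ψ n ω)
      simp only [hg_def, hA_def, hB_def]
      nlinarith [this]
    · have hAA : IndepFun (A n) (A m) μ := hpair n m hnm _ _ Real.measurable_cos Real.measurable_cos
      have hBB : IndepFun (B n) (B m) μ := hpair n m hnm _ _ Real.measurable_sin Real.measurable_sin
      exact (hAA.integrable_mul (hAint n) (hAint m)).add
        (hBB.integrable_mul (hBint n) (hBint m))
  have hgval : ∀ n m, n ≠ m → ∫ ω, g n m ω ∂μ = (Real.sqrt (π * Ω_D) / 2 * c) ^ 2 := by
    intro n m hnm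
    have hAA : IndepFun (A n) (A m) μ := hpair n m hnm _ _ Real.measurable_cos Real.measurable_cos
    have hBB : IndepFun (B n) (B m) μ := hpair n m hnm _ _ Real.measurable_sin Real.measurable_sin
    have h1 : ∫ ω, A n ω * A m ω ∂μ = (∫ ω, A n ω ∂μ) * ∫ ω, A m ω ∂μ :=
      hAA.integral_fun_mul_eq_mul_integral (hAint n).aestronglyMeasurable (hAint m).aestronglyMeasurable
    have h2 : ∫ ω, B n ω * B m ω ∂μ = (∫ ω, B n ω ∂μ) * ∫ ω, B m ω ∂μ :=
      hBB.integral_fun_mul_eq_mul_integral (hBint n).aestronglyMeasurable (hBint m).aestronglyMeasurable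
    have hadd : ∫ ω, g n m ω ∂μ = (∫ ω, A n ω * A m ω ∂μ) + ∫ ω, B n ω * B m ω ∂μ :=
      integral_add (hAA.integrable_mul (hAint n) (hAint m))
        (hBB.integrable_mul (hBint n) (hBint m))
    rw [hadd, h1, h2, hEA n, hEA m, hEB n, hEB m]
    ring
  have hgdiag : ∀ n, ∫ ω, g n n ω ∂μ = Ω_D := by
    intro n
    rw [show (∫ ω, g n n ω ∂μ) = ∫ ω, β n ω ^ 2 ∂μ from
      integral_congr_ae (Filter.Eventually.of_forall fun ω => by
        have := Real.sin_sq_add_cos_sq (Ψ n ω)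
        simp only [hg_def, hA_def, hB_def]
        nlinarith [this])]
    exact hEβ2 n
  -- pointwise identity
  have hpoint : ∀ ω, ‖∑ n, (β n ω : ℂ) *
      Complex.exp (Complex.I * (Ψ n ω : ℂ))‖ ^ 2 = ∑ n, ∑ m, g n m ω := by
    intro ω
    set z := ∑ n, (β n ω : ℂ) * Complex.exp (Complex.I * (Ψ n ω : ℂ)) with hz
    have hre : z.re = ∑ n, A n ω := by
      rw [hz, Complex.re_sum]
      refine Finset.sum_congr rfl fun n _ => ?_
      rw [mul_comm Complex.I, hA_def]
      simp [Complex.mul_re, Complex.exp_ofReal_mul_I_re, Complex.exp_ofReal_mul_I_im]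
    have him : z.im = ∑ n, B n ω := by
      rw [hz, Complex.im_sum]
      refine Finset.sum_congr rfl fun n _ => ?_
      rw [mul_comm Complex.I, hB_def]
      simp [Complex.mul_im, Complex.exp_ofReal_mul_I_re, Complex.exp_ofReal_mul_I_im]
    rw [Complex.sq_norm, Complex.normSq_apply, hre, him, Finset.sum_mul_sum, Finset.sum_mul_sum,
      ← Finset.sum_add_distrib]
    refine Finset.sum_congr rfl fun n _ => ?_
    rw [← Finset.sum_add_distrib]
  -- compute the expectation
  have hint_eq : ∫ ω, ‖∑ n, (β n ω : ℂ) *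
      Complex.exp (Complex.I * (Ψ n ω : ℂ))‖ ^ 2 ∂μ
      = (N : ℝ) * Ω_D + (N : ℝ) * ((N : ℝ) - 1) * (Real.sqrt (π * Ω_D) / 2 * c) ^ 2 := by
    rw [integral_congr_ae (Filter.Eventually.of_forall hpoint)]
    rw [integral_finset_sum _ (fun n _ => integrable_finset_sum _ (fun m _ => hgint n m))]
    have : ∀ n : Fin N, ∫ ω, ∑ m, g n m ω ∂μ = ∑ m, ∫ ω, g n m ω ∂μ :=
      fun n => integral_finset_sum _ (fun m _ => hgint n m)
    rw [Finset.sum_congr rfl fun n _ => this n]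
    set K : ℝ := (Real.sqrt (π * Ω_D) / 2 * c) ^ 2 with hK
    have hval : ∀ n m : Fin N, ∫ ω, g n m ω ∂μ = K + if n = m then Ω_D - K else 0 := by
      intro n m
      by_cases hnm : n = m
      · subst hnm; rw [hgdiag n, if_pos rfl]; ring
      · rw [hgval n m hnm, if_neg hnm]; ring
    rw [Finset.sum_congr rfl fun n _ => Finset.sum_congr rfl fun m _ => hval n m]
    simp only [Finset.sum_add_distrib, Finset.sum_const, Finset.card_univ, Fintype.card_fin,
      nsmul_eq_mul, Finset.sum_ite_eq, Finset.mem_univ, if_pos]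
    push_cast
    ring
  rw [hint_eq]
  have hNne : (N : ℝ) ≠ 0 := Nat.cast_ne_zero.mpr hN.ne'
  have hsq : (Real.sqrt (π * Ω_D) / 2 * c) ^ 2 = π * Ω_D / 4 * c ^ 2 := by
    rw [mul_pow, div_pow, Real.sq_sqrt (by positivity)]
    ring
  rw [hsq, hc_def, ha_def]
  field_simp
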